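/- Fix an integer k ≥ 2 and let T be the list [2, 2, k, 2, 2, 2, 2, 2] of length 8. With d the tridiagonal discriminant and ld_j(T) = (d(T_{<j}) + d(T_{>j}))/d(T), one has d(T) = 9(2k − 3) and ld_2(T) + ld_4(T) + ld_6(T) = (2k − 1)/(2k − 3); in particular this sum is strictly greater than 1. -/
import Mathlib


/-- The tridiagonal matrix with diagonal entries given by the list `T`
and entries `-1` on the sub- and super-diagonal. -/
def tridiagMatrix (T : List ℤ) : Matrix (Fin T.length) (Fin T.length) ℤ :=
  Matrix.of fun i j =>
    if i = j then T.get i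
    else if (i : ℕ) + 1 = (j : ℕ) ∨ (j : ℕ) + 1 = (i : ℕ) then -1 else 0

/-- The discriminant of a chain `T`: the determinant of the associated tridiagonal
matrix (so the discriminant of the empty list is `1`). -/
def chainDisc (T : List ℤ) : ℤ := (tridiagMatrix T).det

/-- The log discrepancy of the `j`-th entry (1-indexed) of the chain `T`:
`ld_j(T) = (d(T_{<j}) + d(T_{>j})) / d(T)`. -/
def chainLd (T : List ℤ) (j : ℕ) : ℚ :=
  ((chainDisc (T.take (j - 1)) : ℚ) + (chainDisc (T.drop j) : ℚ)) / (chainDisc T : ℚ)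

lemma chainDisc_nil : chainDisc [] = 1 := by simp [chainDisc]

lemma chainDisc_singleton (a : ℤ) : chainDisc [a] = a := by
  simp [chainDisc, tridiagMatrix]

lemma submatrix_succ_succ (a : ℤ) (T : List ℤ) :
    (tridiagMatrix (a :: T)).submatrix Fin.succ Fin.succ = tridiagMatrix T := by
  ext i j
  simp [tridiagMatrix, Matrix.submatrix, Fin.succ, Fin.ext_iff]

lemma chainDisc_cons_cons (a b : ℤ) (L : List ℤ) :
    chainDisc (a :: b :: L) = a * chainDisc (b :: L) - chainDisc L := by
  have h := Matrix.det_succ_row_zero (tridiagMatrix (a :: b :: L))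
  rw [chainDisc]; erw [h]
  simp only [List.length_cons]
  rw [Fin.sum_univ_succ, Fin.sum_univ_succ]
  have h0 : ∀ j : Fin L.length,
      tridiagMatrix (a :: b :: L) (0 : Fin (L.length + 1 + 1)) j.succ.succ = 0 := by
    intro j
    simp [tridiagMatrix, Fin.ext_iff]
  rw [Finset.sum_eq_zero (fun j _ => by rw [h0 j]; ring)]
  -- evaluate entries M 0 0 = a, M 0 1 = -1
  have e00 : tridiagMatrix (a :: b :: L) (0 : Fin (L.length + 1 + 1)) (0 : Fin (L.length + 1 + 1)) = a := by
    simp [tridiagMatrix]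
  have e01 : tridiagMatrix (a :: b :: L) (0 : Fin (L.length + 1 + 1))
      ((0 : Fin (L.length + 1)).succ) = -1 := by
    simp [tridiagMatrix, Fin.ext_iff]
  rw [e00, e01]
  -- the two minors
  have m0 : (tridiagMatrix (a :: b :: L)).submatrix Fin.succ
      (Fin.succAbove (0 : Fin (L.length + 1 + 1))) = tridiagMatrix (b :: L) := by
    rw [show Fin.succAbove (0 : Fin (L.length + 1 + 1)) = Fin.succ from ?_]
    · exact submatrix_succ_succ a (b :: L)
    · ext x : 1; simp [Fin.succAbove]
  rw [m0]
  -- second minor: expand along first column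
  set N := (tridiagMatrix (a :: b :: L)).submatrix Fin.succ
      ((0 : Fin (L.length + 1)).succ.succAbove) with hN
  have hdetN : N.det = - chainDisc L := by
    rw [Matrix.det_succ_column_zero, Fin.sum_univ_succ]
    have hN0 : ∀ i : Fin L.length, N i.succ 0 = 0 := by
      intro i
      simp [hN, tridiagMatrix, Fin.succAbove, Fin.ext_iff, Fin.lt_def]
    rw [Finset.sum_eq_zero (fun i _ => by rw [hN0 i]; ring)]
    have eN00 : N (0 : Fin (L.length + 1)) (0 : Fin (L.length + 1)) = -1 := by
      simp [hN, tridiagMatrix, Fin.succAbove, Fin.ext_iff, Fin.lt_def]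
    have mN : N.submatrix (Fin.succAbove (0 : Fin (L.length + 1))) Fin.succ
        = tridiagMatrix L := by
      ext i j
      simp [hN, tridiagMatrix, Fin.succAbove, Fin.ext_iff, Fin.lt_def]
    rw [eN00, mN]
    simp [chainDisc]
  simp only [chainDisc] at hdetN ⊢
  simp only [Fin.val_zero, Fin.val_succ, pow_zero, pow_one, zero_add]
  linear_combination hdetN


/-- **Del Pezzo criterion for the chain `[2, 2, k, 2, 2, 2, 2, 2]`.**
For every integer `k ≥ 2` one has `d(T) = 9(2k − 3)` and
`ld_2(T) + ld_4(T) + ld_6(T) = (2k − 1)/(2k − 3) > 1`. -/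
theorem chain_22k22222 (k : ℤ) (hk : 2 ≤ k) :
    chainDisc [2, 2, k, 2, 2, 2, 2, 2] = 9 * (2 * k - 3) ∧
    chainLd [2, 2, k, 2, 2, 2, 2, 2] 2 + chainLd [2, 2, k, 2, 2, 2, 2, 2] 4 +
        chainLd [2, 2, k, 2, 2, 2, 2, 2] 6 =
      (2 * (k : ℚ) - 1) / (2 * (k : ℚ) - 3) ∧
    1 < chainLd [2, 2, k, 2, 2, 2, 2, 2] 2 + chainLd [2, 2, k, 2, 2, 2, 2, 2] 4 +
        chainLd [2, 2, k, 2, 2, 2, 2, 2] 6 := by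
  have dT : chainDisc [2, 2, k, 2, 2, 2, 2, 2] = 9 * (2 * k - 3) := by
    simp [chainDisc_cons_cons, chainDisc_singleton, chainDisc_nil]; ring
  have d1 : chainDisc [2] = 2 := chainDisc_singleton 2
  have d2 : chainDisc [k, 2, 2, 2, 2, 2] = 6 * k - 5 := by
    simp [chainDisc_cons_cons, chainDisc_singleton, chainDisc_nil]; ring
  have d3 : chainDisc [2, 2, k] = 3 * k - 2 := by
    simp [chainDisc_cons_cons, chainDisc_singleton, chainDisc_nil]; ring
  have d4 : chainDisc [2, 2, 2, 2] = 5 := by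
    simp [chainDisc_cons_cons, chainDisc_singleton, chainDisc_nil]
  have d5 : chainDisc [2, 2, k, 2, 2] = 9 * k - 12 := by
    simp [chainDisc_cons_cons, chainDisc_singleton, chainDisc_nil]; ring
  have d6 : chainDisc [2, 2] = 3 := by
    simp [chainDisc_cons_cons, chainDisc_singleton, chainDisc_nil]
  have hk3 : (2 : ℚ) * (k : ℚ) - 3 ≠ 0 := by
    have : (2 : ℚ) ≤ (k : ℚ) := by exact_mod_cast hk
    nlinarith
  have hsum : chainLd [2, 2, k, 2, 2, 2, 2, 2] 2 + chainLd [2, 2, k, 2, 2, 2, 2, 2] 4 +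
      chainLd [2, 2, k, 2, 2, 2, 2, 2] 6 = (2 * (k : ℚ) - 1) / (2 * (k : ℚ) - 3) := by
    simp only [chainLd, List.take, List.drop, dT, d1, d2, d3, d4, d5, d6]
    push_cast
    field_simp
    ring
  refine ⟨dT, hsum, ?_⟩
  rw [hsum]
  have hpos : (0 : ℚ) < 2 * (k : ℚ) - 3 := by
    have : (2 : ℚ) ≤ (k : ℚ) := by exact_mod_cast hk
    nlinarith
  rw [lt_div_iff₀ hpos]
  nlinarith
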